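/- Let N ≥ 1 be an integer and f : I → ℝ of class C^N with ‖f^{(j)}‖_I ≤ M_j for all 0 ≤ j ≤ N. Let m ∈ ℕ with m + 1 ≤ N and suppose that for each 0 ≤ j ≤ m there is a point x_j ∈ I with f^{(j)}(x_j) = 0; let x_{−1} ∈ I be arbitrary. Set b_0(x_{−1}) := max_{0 ≤ j ≤ N} |f^{(j)}(x_{−1})|/(e^j·M_j), assume b_0(x_{−1}) > 0, and let j_0 := min{j ∈ ℕ : j ≥ log(1/b_0(x_{−1}))}. Then Σ_{j=0}^{m} |x_{j−1} − x_j| ≥ (1/e)·Σ_{j=j_0+1}^{m+1} 1/μ_j (a sum over an empty index range being 0). Moreover, if j_0 ≤ m then this inequality is strict. -/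

import Mathlib

/-- `bFun f M N n t = max_{n ≤ j ≤ N} |f^(j)(t)| / (e^j M_j)`. -/
noncomputable def bFun (f : ℝ → ℝ) (M : ℕ → ℝ) (N n : ℕ) (t : ℝ) : ℝ :=
  sSup ((fun j => |iteratedDeriv j f t| / (Real.exp 1 ^ j * M j)) '' Set.Icc n N)

namespace BangAux

open Set Finset

noncomputable def trm (f : ℝ → ℝ) (M : ℕ → ℝ) (j : ℕ) (t : ℝ) : ℝ :=
  |iteratedDeriv j f t| / (Real.exp 1 ^ j * M j)

lemma bFun_eq (f : ℝ → ℝ) (M : ℕ → ℝ) (N n : ℕ) (t : ℝ) :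
    bFun f M N n t = sSup ((fun j => trm f M j t) '' Set.Icc n N) := rfl

lemma iteratedDerivWithin_isOpen_eq {g : ℝ → ℝ} {U : Set ℝ} (hU : IsOpen U) {u : ℝ}
    (hu : u ∈ U) (n : ℕ) : iteratedDerivWithin n g U u = iteratedDeriv n g u := by
  rw [iteratedDerivWithin_eq_iteratedFDerivWithin, iteratedDeriv_eq_iteratedFDeriv,
    iteratedFDerivWithin_of_isOpen n hU hu]

lemma cdIter : ∀ (j : ℕ) (k N : ℕ) (g : ℝ → ℝ) (U : Set ℝ), IsOpen U →
    ContDiffOn ℝ (N : ℕ∞) g U → j + k ≤ N → ContDiffOn ℝ (k : ℕ∞) (iteratedDeriv j g) U := by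
  intro j
  induction j with
  | zero =>
    intro k N g U hU hg hk
    simpa [iteratedDeriv_zero] using hg.of_le (by exact_mod_cast (show k ≤ N by omega))
  | succ j ih =>
    intro k N g U hU hg hk
    rw [iteratedDeriv_succ']
    have hN1 : 1 ≤ N := by omega
    have hd : ContDiffOn ℝ ((N - 1 : ℕ) : ℕ∞) (deriv g) U := by
      apply hg.deriv_of_isOpen hU
      exact_mod_cast Nat.le_of_eq (show N - 1 + 1 = N by omega)
    exact ih k (N - 1) (deriv g) U hU hd (by omega)

lemma iter_iter (g : ℝ → ℝ) (j : ℕ) : ∀ i : ℕ, iteratedDeriv i (iteratedDeriv j g) = iteratedDeriv (j + i) g := by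
  intro i
  induction i with
  | zero => simp [iteratedDeriv_zero]
  | succ i ih => rw [iteratedDeriv_succ, ih, ← iteratedDeriv_succ, Nat.add_assoc]

lemma idw_eq {g : ℝ → ℝ} {U : Set ℝ} (hU : IsOpen U) {s : Set ℝ} (hsU : s ⊆ U)
    (hs : UniqueDiffOn ℝ s) :
    ∀ (n : ℕ), ContDiffOn ℝ (n : ℕ∞) g U → ∀ u ∈ s, iteratedDerivWithin n g s u = iteratedDeriv n g u := by
  intro n
  induction n with
  | zero => intro _ u _; simp [iteratedDerivWithin_zero, iteratedDeriv_zero]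
  | succ n ih =>
    intro hg u hu
    rw [iteratedDerivWithin_succ]
    have heq : Set.EqOn (iteratedDerivWithin n g s) (iteratedDeriv n g) s := by
      intro v hv
      exact ih (hg.of_le (by exact_mod_cast Nat.le_succ n)) v hv
    rw [derivWithin_congr heq (heq hu)]
    have hdiff : DifferentiableAt ℝ (iteratedDeriv n g) u := by
      have h1 : ContDiffOn ℝ ((1 : ℕ) : ℕ∞) (iteratedDeriv n g) U :=
        cdIter n 1 (n + 1) g U hU hg (le_refl _)
      have := h1.differentiableOn (by simp)
      exact (this u (hsU hu)).differentiableAt (hU.mem_nhds (hsU hu))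
    rw [hdiff.derivWithin (hs.uniqueDiffWithinAt hu), ← iteratedDeriv_succ]

section Basics

variable {μ M : ℕ → ℝ} {f : ℝ → ℝ} {N : ℕ}

lemma Mpos (hM0 : 0 < M 0) (hμpos : ∀ j, 1 ≤ j → 0 < μ j)
    (hMrec : ∀ j, M (j + 1) = M j * μ (j + 1)) : ∀ j, 0 < M j := by
  intro j
  induction j with
  | zero => exact hM0
  | succ j ih => rw [hMrec]; exact mul_pos ih (hμpos (j+1) (by omega))

lemma μmono (hμmono : ∀ j, 1 ≤ j → μ j ≤ μ (j + 1)) :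
    ∀ i j, 1 ≤ i → i ≤ j → μ i ≤ μ j := by
  intro i j hi hij
  induction j with
  | zero => omega
  | succ j ih =>
    rcases Nat.lt_or_ge i (j+1) with h | h
    · exact le_trans (ih (by omega)) (hμmono j (by omega))
    · have : i = j + 1 := by omega
      rw [this]

lemma Mratio (hM0 : 0 < M 0) (hμpos : ∀ j, 1 ≤ j → 0 < μ j)
    (hμmono : ∀ j, 1 ≤ j → μ j ≤ μ (j + 1))
    (hMrec : ∀ j, M (j + 1) = M j * μ (j + 1)) (j p : ℕ) :
    ∀ i, j + i ≤ p + 1 → M (j + i) ≤ M j * μ (p + 1) ^ i := by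
  intro i
  induction i with
  | zero => simp
  | succ i ih =>
    intro hle
    have h1 : M (j + i) ≤ M j * μ (p+1) ^ i := ih (by omega)
    have h2 : μ (j + i + 1) ≤ μ (p + 1) := μmono hμmono _ _ (by omega) (by omega)
    have h3 : 0 < μ (j + i + 1) := hμpos _ (by omega)
    have h4 : 0 < M j := Mpos hM0 hμpos hMrec j
    have h5 : 0 ≤ M j * μ (p+1) ^ i :=
      mul_nonneg h4.le (pow_nonneg (hμpos (p+1) (by omega)).le i)
    calc M (j + (i+1)) = M (j + i) * μ (j + i + 1) := by
          have he : j + (i+1) = (j + i) + 1 := rfl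
          rw [he, hMrec]
    _ ≤ (M j * μ (p+1) ^ i) * μ (p + 1) := mul_le_mul h1 h2 (le_of_lt h3) h5
    _ = M j * μ (p+1) ^ (i+1) := by ring

lemma trm_nonneg (hM : 0 < M j) (t : ℝ) : 0 ≤ trm f M j t :=
  div_nonneg (abs_nonneg _) (le_of_lt (mul_pos (pow_pos (Real.exp_pos 1) j) hM))

lemma denom_pos (hM : 0 < M j) : 0 < Real.exp 1 ^ j * M j :=
  mul_pos (pow_pos (Real.exp_pos 1) j) hM

lemma trm_le_exp {j : ℕ} (hM : 0 < M j) {t : ℝ} (h : |iteratedDeriv j f t| ≤ M j) :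
    trm f M j t ≤ Real.exp (-(j:ℝ)) := by
  have hd : 0 < Real.exp 1 ^ j * M j := denom_pos hM
  have h2 : trm f M j t ≤ M j / (Real.exp 1 ^ j * M j) := (div_le_div_iff_of_pos_right hd).mpr h
  refine h2.trans (le_of_eq ?_)
  rw [Real.exp_neg, ← Real.exp_one_pow]
  field_simp

end Basics

section BFun

variable {μ M : ℕ → ℝ} {f : ℝ → ℝ} {N n j : ℕ} {t : ℝ} {B : ℝ}

lemma le_bFun (hj1 : n ≤ j) (hj2 : j ≤ N) : trm f M j t ≤ bFun f M N n t := by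
  rw [bFun_eq]
  exact le_csSup (((Set.finite_Icc n N).image _).bddAbove) ⟨j, ⟨hj1, hj2⟩, rfl⟩

lemma bFun_le (hnN : n ≤ N) (h : ∀ j, n ≤ j → j ≤ N → trm f M j t ≤ B) :
    bFun f M N n t ≤ B := by
  rw [bFun_eq]
  apply csSup_le ((Set.nonempty_Icc.mpr hnN).image _)
  rintro b ⟨j, hj, rfl⟩
  exact h j hj.1 hj.2

lemma bFun_exists (hnN : n ≤ N) (t : ℝ) :
    ∃ j, n ≤ j ∧ j ≤ N ∧ bFun f M N n t = trm f M j t := by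
  have h := ((Set.nonempty_Icc.mpr hnN).image (fun j => trm f M j t)).csSup_mem
    ((Set.finite_Icc n N).image _)
  rw [← bFun_eq] at h
  obtain ⟨j, hj, he⟩ := h
  exact ⟨j, hj.1, hj.2, he.symm⟩

lemma bFun_nonneg (hM : ∀ j, 0 < M j) (hnN : n ≤ N) (t : ℝ) : 0 ≤ bFun f M N n t :=
  (trm_nonneg (hM n) t).trans (le_bFun le_rfl hnN)

lemma bFun_le_exp (hM : ∀ j, 0 < M j) (hnN : n ≤ N)
    (hbdt : ∀ j, j ≤ N → |iteratedDeriv j f t| ≤ M j) :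
    bFun f M N n t ≤ Real.exp (-(n:ℝ)) := by
  apply bFun_le hnN
  intro j hj1 hj2
  refine (trm_le_exp (hM j) (hbdt j hj2)).trans (Real.exp_le_exp.mpr ?_)
  simp only [neg_le_neg_iff, Nat.cast_le]
  exact hj1

lemma bFun_succ (hM : ∀ j, 0 < M j) (hn : n < N) (h0 : iteratedDeriv n f t = 0) :
    bFun f M N n t = bFun f M N (n+1) t := by
  apply le_antisymm
  · apply bFun_le (le_of_lt hn)
    intro j hj1 hj2
    rcases Nat.eq_or_lt_of_le hj1 with h | h
    · have : trm f M j t = 0 := by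
        rw [trm, ← h, h0]
        simp
      rw [this]
      exact bFun_nonneg hM hn t
    · exact le_bFun h hj2
  · apply bFun_le hn
    intro j hj1 hj2
    exact le_bFun (by omega) hj2

lemma abs_eq_trm_mul (hM : 0 < M j) :
    |iteratedDeriv j f t| = trm f M j t * (Real.exp 1 ^ j * M j) := by
  rw [trm, div_mul_cancel₀]
  exact (denom_pos hM).ne'

lemma contOn_sup' {ι : Type*} (s : Finset ι) (hs : s.Nonempty) (g : ι → ℝ → ℝ) (A : Set ℝ)
    (hg : ∀ i ∈ s, ContinuousOn (g i) A) :
    ContinuousOn (fun t => s.sup' hs (fun i => g i t)) A := by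
  induction hs using Finset.Nonempty.cons_induction with
  | singleton a => simpa using hg a (by simp)
  | cons a s ha hs ih =>
    simp only [Finset.sup'_cons hs]
    exact (hg a (by simp)).sup (ih (fun i hi => hg i (by simp [hi])))

lemma bFun_cont {U : Set ℝ} {x y : ℝ} (hnN : n ≤ N) (hU : IsOpen U)
    (hfU : ContDiffOn ℝ (N : ℕ∞) f U) (hIU : Set.Icc x y ⊆ U) :
    ContinuousOn (fun t => bFun f M N n t) (Set.Icc x y) := by
  have hrw : (fun t => bFun f M N n t) =
      (fun t => (Finset.Icc n N).sup' (Finset.nonempty_Icc.mpr hnN) (fun j => trm f M j t)) := by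
    funext t
    rw [bFun_eq, Finset.sup'_eq_csSup_image, Finset.coe_Icc]
  rw [hrw]
  apply contOn_sup'
  intro i hi
  rw [Finset.mem_Icc] at hi
  have hci : ContinuousOn (iteratedDeriv i f) U :=
    (cdIter i 0 N f U hU hfU (by omega)).continuousOn
  exact ((hci.mono hIU).abs).div_const _

end BFun

section Taylor

lemma tbound_lt (g : ℝ → ℝ) (U : Set ℝ) (hU : IsOpen U) (a b : ℝ) (hab : Set.Icc a b ⊆ U)
    (q : ℕ) (hg : ContDiffOn ℝ ((q + 1 : ℕ) : ℕ∞) g U)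
    (s t : ℝ) (hs : s ∈ Set.Icc a b) (ht : t ∈ Set.Icc a b) (hst : s < t)
    (A : ℕ → ℝ) (hA : ∀ i, i ≤ q → |iteratedDeriv i g s| ≤ A i)
    (hA' : ∀ u ∈ Set.Icc a b, |iteratedDeriv (q+1) g u| ≤ A (q+1)) :
    |g t| ≤ ∑ i ∈ Finset.range (q+2), A i * (t - s) ^ i / (Nat.factorial i) := by
  have hsub : Set.Icc s t ⊆ Set.Icc a b := Set.Icc_subset_Icc hs.1 ht.2
  have hsubU : Set.Icc s t ⊆ U := hsub.trans hab
  have hud : UniqueDiffOn ℝ (Set.Icc s t) := uniqueDiffOn_Icc hst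
  have hgq : ContDiffOn ℝ ((q : ℕ) : ℕ∞) g (Set.Icc s t) :=
    (hg.mono hsubU).of_le (by exact_mod_cast Nat.le_succ q)
  have hgq' : DifferentiableOn ℝ (iteratedDerivWithin q g (Set.Icc s t)) (Set.Ioo s t) :=
    ((hg.mono hsubU).differentiableOn_iteratedDerivWithin
      (by exact_mod_cast Nat.lt_succ_self q) hud).mono Set.Ioo_subset_Icc_self
  obtain ⟨ξ, hξ, heq⟩ := taylor_mean_remainder_lagrange hst.ne
    (by rw [Set.uIcc_of_le hst.le]; exact hgq)
    (by rw [Set.uIcc_of_le hst.le, Set.uIoo_of_le hst.le]; exact hgq')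
  rw [Set.uIcc_of_le hst.le] at heq
  rw [Set.uIoo_of_le hst.le] at hξ
  have hsmem : s ∈ Set.Icc s t := Set.left_mem_Icc.mpr hst.le
  have hξmem : ξ ∈ Set.Icc s t := Set.Ioo_subset_Icc_self hξ
  have hpoly : taylorWithinEval g q (Set.Icc s t) s t =
      ∑ k ∈ Finset.range (q+1), ((Nat.factorial k : ℝ)⁻¹ * (t - s) ^ k) * iteratedDeriv k g s := by
    rw [taylor_within_apply]
    apply Finset.sum_congr rfl
    intro k hk
    rw [Finset.mem_range] at hk
    rw [idw_eq hU hsubU hud k (hg.of_le (by exact_mod_cast (by omega : k ≤ q + 1))) s hsmem]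
    simp [smul_eq_mul]
  have hrem : iteratedDerivWithin (q+1) g (Set.Icc s t) ξ = iteratedDeriv (q+1) g ξ :=
    idw_eq hU hsubU hud (q+1) hg ξ hξmem
  have hgt : g t = (∑ k ∈ Finset.range (q+1), ((Nat.factorial k : ℝ)⁻¹ * (t - s) ^ k) *
      iteratedDeriv k g s) + iteratedDeriv (q+1) g ξ * (t - s) ^ (q+1) / (Nat.factorial (q+1)) := by
    have := heq
    rw [hrem, hpoly] at this
    linarith
  rw [hgt]
  nth_rewrite 2 [Finset.sum_range_succ]
  have hts : (0:ℝ) < t - s := by linarith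
  refine (abs_add_le _ _).trans ?_
  refine add_le_add ?_ ?_
  · refine (Finset.abs_sum_le_sum_abs _ _).trans ?_
    apply Finset.sum_le_sum
    intro k hk
    rw [Finset.mem_range] at hk
    rw [abs_mul]
    have h1 : |(Nat.factorial k : ℝ)⁻¹ * (t - s) ^ k| = (t - s) ^ k / (Nat.factorial k) := by
      rw [abs_mul, abs_pow, abs_of_pos hts, abs_inv, Nat.abs_cast]
      ring
    rw [h1]
    have h2 := hA k (by omega)
    have h3 : (0:ℝ) < (Nat.factorial k : ℝ) := by exact_mod_cast Nat.factorial_pos k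
    calc (t - s) ^ k / (Nat.factorial k) * |iteratedDeriv k g s|
        ≤ (t - s) ^ k / (Nat.factorial k) * A k := by
          apply mul_le_mul_of_nonneg_left h2
          positivity
    _ = A k * (t - s) ^ k / (Nat.factorial k) := by ring
  · rw [abs_div, abs_mul, abs_pow, abs_of_pos hts, Nat.abs_cast]
    have h3 : (0:ℝ) < (Nat.factorial (q+1) : ℝ) := by exact_mod_cast Nat.factorial_pos (q+1)
    have h4 : (0:ℝ) ≤ (t - s) ^ (q+1) := by positivity
    exact (div_le_div_iff_of_pos_right h3).mpr
      (mul_le_mul_of_nonneg_right (hA' ξ (hsub hξmem)) h4)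

lemma tbound (g : ℝ → ℝ) (U : Set ℝ) (hU : IsOpen U) (a b : ℝ) (hab : Set.Icc a b ⊆ U)
    (q : ℕ) (hg : ContDiffOn ℝ ((q + 1 : ℕ) : ℕ∞) g U)
    (s t : ℝ) (hs : s ∈ Set.Icc a b) (ht : t ∈ Set.Icc a b) (hst : s ≠ t)
    (A : ℕ → ℝ) (hA : ∀ i, i ≤ q → |iteratedDeriv i g s| ≤ A i)
    (hA' : ∀ u ∈ Set.Icc a b, |iteratedDeriv (q+1) g u| ≤ A (q+1)) :
    |g t| ≤ ∑ i ∈ Finset.range (q+2), A i * |t - s| ^ i / (Nat.factorial i) := by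
  rcases lt_or_gt_of_ne hst with h | h
  · have := tbound_lt g U hU a b hab q hg s t hs ht h A hA hA'
    refine this.trans (le_of_eq ?_)
    apply Finset.sum_congr rfl
    intro i _
    rw [abs_of_pos (by linarith : (0:ℝ) < t - s)]
  · -- t < s : apply the previous result to g ∘ neg
    set g' : ℝ → ℝ := fun u => g (-u) with hg'def
    set U' : Set ℝ := (fun u : ℝ => -u) ⁻¹' U with hU'def
    have hU' : IsOpen U' := (continuous_neg).isOpen_preimage U hU
    have hab' : Set.Icc (-b) (-a) ⊆ U' := by
      intro u hu
      have : -u ∈ Set.Icc a b := ⟨by linarith [hu.2], by linarith [hu.1]⟩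
      exact hab this
    have hgc : ContDiffOn ℝ ((q + 1 : ℕ) : ℕ∞) g' U' := by
      apply hg.comp ((contDiff_neg).contDiffOn)
      intro u hu
      exact hu
    have hsm : -s ∈ Set.Icc (-b) (-a) := ⟨by linarith [hs.2], by linarith [hs.1]⟩
    have htm : -t ∈ Set.Icc (-b) (-a) := ⟨by linarith [ht.2], by linarith [ht.1]⟩
    have habs : ∀ (i : ℕ) (u : ℝ), |iteratedDeriv i g' u| = |iteratedDeriv i g (-u)| := by
      intro i u
      rw [iteratedDeriv_comp_neg]
      rw [smul_eq_mul, abs_mul, abs_pow, abs_neg, abs_one, one_pow, one_mul]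
    have hA2 : ∀ i, i ≤ q → |iteratedDeriv i g' (-s)| ≤ A i := by
      intro i hi
      rw [habs, neg_neg]
      exact hA i hi
    have hA2' : ∀ u ∈ Set.Icc (-b) (-a), |iteratedDeriv (q+1) g' u| ≤ A (q+1) := by
      intro u hu
      rw [habs]
      exact hA' (-u) ⟨by linarith [hu.2], by linarith [hu.1]⟩
    have := tbound_lt g' U' hU' (-b) (-a) hab' q hgc (-s) (-t) hsm htm (by linarith) A hA2 hA2'
    have hval : |g' (-t)| = |g t| := by rw [hg'def]; simp
    rw [hval] at this
    refine this.trans (le_of_eq ?_)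
    apply Finset.sum_congr rfl
    intro i _
    have : -t - -s = s - t := by ring
    rw [this, abs_of_neg (by linarith : t - s < 0)]
    congr 2
    ring

end Taylor

section Key

variable {μ M : ℕ → ℝ} {f : ℝ → ℝ} {N : ℕ} {x y : ℝ} {U : Set ℝ}

lemma key (hμpos : ∀ j, 1 ≤ j → 0 < μ j) (hμmono : ∀ j, 1 ≤ j → μ j ≤ μ (j + 1))
    (hM0 : 0 < M 0) (hMrec : ∀ j, M (j + 1) = M j * μ (j + 1))
    (hU : IsOpen U) (hIU : Set.Icc x y ⊆ U) (hfU : ContDiffOn ℝ (N : ℕ∞) f U)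
    (hbd : ∀ j ≤ N, ∀ t ∈ Set.Icc x y, |iteratedDeriv j f t| ≤ M j)
    (n p : ℕ) (hnp : n ≤ p) (hpN : p + 1 ≤ N)
    {s t : ℝ} (hs : s ∈ Set.Icc x y) (ht : t ∈ Set.Icc x y) (hst : s ≠ t) :
    bFun f M N n t < max (bFun f M N n s) (Real.exp (-((p:ℝ)+1))) *
      Real.exp (Real.exp 1 * μ (p+1) * |s - t|) := by
  have hMp : ∀ j, 0 < M j := Mpos hM0 hμpos hMrec
  set E := Real.exp 1 with hE
  set b := max (bFun f M N n s) (Real.exp (-((p:ℝ)+1))) with hb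
  have hbpos : 0 < b := lt_of_lt_of_le (Real.exp_pos _) (le_max_right _ _)
  set d := |s - t| with hd
  have hdpos : 0 < d := abs_pos.mpr (sub_ne_zero.mpr hst)
  set z := E * μ (p+1) * d with hz
  have hμp : 0 < μ (p+1) := hμpos (p+1) (by omega)
  have hzpos : 0 < z := mul_pos (mul_pos (Real.exp_pos 1) hμp) hdpos
  have hexpz : 1 < Real.exp z := by
    rw [← Real.exp_zero]
    exact Real.exp_lt_exp.mpr hzpos
  have hterm : ∀ j, n ≤ j → j ≤ N → trm f M j t < b * Real.exp z := by
    intro j hj1 hj2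
    rcases le_or_gt j p with hjp | hjp
    · -- Taylor case
      set q := p - j with hq
      have hjq : j + q = p := by omega
      have hg : ContDiffOn ℝ ((q + 1 : ℕ) : ℕ∞) (iteratedDeriv j f) U :=
        cdIter j (q+1) N f U hU hfU (by omega)
      set A : ℕ → ℝ := fun i => E ^ (j+i) * M (j+i) * b with hA
      have hAbound : ∀ i, i ≤ q → |iteratedDeriv i (iteratedDeriv j f) s| ≤ A i := by
        intro i hi
        rw [iter_iter]
        have h1 : trm f M (j+i) s ≤ b :=
          le_trans (le_bFun (by omega) (by omega)) (le_max_left _ _)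
        rw [abs_eq_trm_mul (hMp (j+i))]
        calc trm f M (j+i) s * (E ^ (j+i) * M (j+i))
            ≤ b * (E ^ (j+i) * M (j+i)) :=
              mul_le_mul_of_nonneg_right h1 (denom_pos (hMp _)).le
        _ = A i := by rw [hA]; ring
      have hA'bound : ∀ u ∈ Set.Icc x y, |iteratedDeriv (q+1) (iteratedDeriv j f) u| ≤ A (q+1) := by
        intro u hu
        rw [iter_iter, (by omega : j + (q+1) = p+1)]
        have h1 : |iteratedDeriv (p+1) f u| ≤ M (p+1) := hbd (p+1) hpN u hu
        have h2 : M (p+1) ≤ A (q+1) := by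
          have hle : Real.exp (-((p:ℝ)+1)) ≤ b := le_max_right _ _
          have hEp : E ^ (p+1) * Real.exp (-((p:ℝ)+1)) = 1 := by
            rw [hE, Real.exp_one_pow, ← Real.exp_add]
            rw [show ((p+1 : ℕ) : ℝ) + -((p:ℝ)+1) = 0 by push_cast; ring]
            exact Real.exp_zero
          have hApos : A (q+1) = E ^ (p+1) * M (p+1) * b := by
            simp only [hA]
            rw [(by omega : j + (q+1) = p+1)]
          rw [hApos]
          calc M (p+1) = E ^ (p+1) * M (p+1) * Real.exp (-((p:ℝ)+1)) := by
                rw [show E ^ (p+1) * M (p+1) * Real.exp (-((p:ℝ)+1))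
                    = (E ^ (p+1) * Real.exp (-((p:ℝ)+1))) * M (p+1) by ring, hEp, one_mul]
          _ ≤ E ^ (p+1) * M (p+1) * b := by
                apply mul_le_mul_of_nonneg_left hle
                exact (mul_pos (pow_pos (Real.exp_pos 1) _) (hMp _)).le
        exact h1.trans h2
      have htay := tbound (iteratedDeriv j f) U hU x y hIU q hg s t hs ht hst A hAbound hA'bound
      have hdeq : |t - s| = d := by rw [hd, abs_sub_comm]
      rw [hdeq] at htay
      have hsum : ∑ i ∈ Finset.range (q+2), A i * d ^ i / (Nat.factorial i)
          ≤ E ^ j * M j * b * ∑ i ∈ Finset.range (q+2), z ^ i / (Nat.factorial i) := by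
        rw [Finset.mul_sum]
        apply Finset.sum_le_sum
        intro i hi
        have hr : M (j + i) ≤ M j * μ (p+1) ^ i := by
          apply Mratio hM0 hμpos hμmono hMrec j p i
          rw [Finset.mem_range] at hi
          omega
        have hnn1 : (0:ℝ) ≤ E ^ j * b / (Nat.factorial i) :=
          div_nonneg (mul_nonneg (pow_nonneg (Real.exp_pos 1).le j) hbpos.le)
            (Nat.cast_nonneg _)
        have hnn2 : (0:ℝ) ≤ E ^ i * d ^ i :=
          mul_nonneg (pow_nonneg (Real.exp_pos 1).le i) (pow_nonneg (abs_nonneg _) i)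
        calc A i * d ^ i / (Nat.factorial i)
            = (E ^ j * b / (Nat.factorial i)) * (M (j+i) * (E ^ i * d ^ i)) := by
              simp only [hA]
              rw [pow_add]; ring
        _ ≤ (E ^ j * b / (Nat.factorial i)) * ((M j * μ (p+1) ^ i) * (E ^ i * d ^ i)) :=
              mul_le_mul_of_nonneg_left (mul_le_mul_of_nonneg_right hr hnn2) hnn1
        _ = E ^ j * M j * b * (z ^ i / (Nat.factorial i)) := by
              rw [hz, mul_pow, mul_pow]; ring
      have hexpsum : ∑ i ∈ Finset.range (q+2), z ^ i / (Nat.factorial i) < Real.exp z := by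
        have h1 := Real.sum_le_exp_of_nonneg hzpos.le (q+3)
        have h2 : ∑ i ∈ Finset.range (q+3), z ^ i / (Nat.factorial i)
            = ∑ i ∈ Finset.range (q+2), z ^ i / (Nat.factorial i)
              + z ^ (q+2) / (Nat.factorial (q+2)) := Finset.sum_range_succ _ _
        have h3 : (0:ℝ) < z ^ (q+2) / (Nat.factorial (q+2)) :=
          div_pos (pow_pos hzpos _) (by exact_mod_cast Nat.factorial_pos (q+2))
        have h4 : ∀ i ∈ Finset.range (q+3), z ^ i / (Nat.factorial i) = z ^ i / (Nat.factorial i) :=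
          fun _ _ => rfl
        have h5 : ∑ i ∈ Finset.range (q+3), z ^ i / (Nat.factorial i) ≤ Real.exp z := by
          refine le_trans (le_of_eq ?_) h1
          apply Finset.sum_congr rfl
          intro i _
          rfl
        linarith
      have hdenpos := denom_pos (M := M) (j := j) (hMp j)
      have hfinal : |iteratedDeriv j f t| < E ^ j * M j * (b * Real.exp z) := by
        have hEMb : 0 < E ^ j * M j * b := mul_pos hdenpos hbpos
        calc |iteratedDeriv j f t| ≤ ∑ i ∈ Finset.range (q+2), A i * d ^ i / (Nat.factorial i) := htay
        _ ≤ E ^ j * M j * b * ∑ i ∈ Finset.range (q+2), z ^ i / (Nat.factorial i) := hsum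
        _ < E ^ j * M j * b * Real.exp z := by
              exact mul_lt_mul_of_pos_left hexpsum hEMb
        _ = E ^ j * M j * (b * Real.exp z) := by ring
      rw [trm, div_lt_iff₀ hdenpos]
      calc |iteratedDeriv j f t| < E ^ j * M j * (b * Real.exp z) := hfinal
      _ = b * Real.exp z * (E ^ j * M j) := by ring
    · -- tail case j ≥ p+1
      have h1 : trm f M j t ≤ Real.exp (-(j:ℝ)) := trm_le_exp (hMp j) (hbd j hj2 t ht)
      have h2 : Real.exp (-(j:ℝ)) ≤ Real.exp (-((p:ℝ)+1)) := by
        apply Real.exp_le_exp.mpr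
        have : ((p:ℝ)+1) ≤ (j:ℝ) := by exact_mod_cast hjp
        linarith
      have h3 : Real.exp (-((p:ℝ)+1)) ≤ b := le_max_right _ _
      have h4 : b < b * Real.exp z := by
        nth_rewrite 1 [← mul_one b]
        exact mul_lt_mul_of_pos_left hexpz hbpos
      linarith
  obtain ⟨j', hj1, hj2, he⟩ := bFun_exists (show n ≤ N by omega) t
  rw [he]
  exact hterm j' hj1 hj2

end Key

section G

variable {μ : ℕ → ℝ} {m : ℕ}

noncomputable def Gfun (μ : ℕ → ℝ) (m : ℕ) (c : ℝ) : ℝ :=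
  (Real.exp 1)⁻¹ * ∑ i ∈ Finset.Icc 1 (m+1), max 0 (min 1 ((i:ℝ) - c)) / μ i

lemma G_anti (hμpos : ∀ j, 1 ≤ j → 0 < μ j) {c c' : ℝ} (h : c ≤ c') :
    Gfun μ m c' ≤ Gfun μ m c := by
  unfold Gfun
  apply mul_le_mul_of_nonneg_left _ (inv_nonneg.mpr (Real.exp_pos 1).le)
  apply Finset.sum_le_sum
  intro i hi
  rw [Finset.mem_Icc] at hi
  have hμi : 0 < μ i := hμpos i hi.1
  apply (div_le_div_iff_of_pos_right hμi).mpr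
  exact max_le_max le_rfl (min_le_min le_rfl (by linarith))

lemma G_zero {c : ℝ} (hc : (m:ℝ) + 1 ≤ c) : Gfun μ m c = 0 := by
  unfold Gfun
  rw [Finset.sum_eq_zero, mul_zero]
  intro i hi
  rw [Finset.mem_Icc] at hi
  have h2 : (i:ℝ) - c ≤ 0 := by
    have : (i:ℝ) ≤ (m:ℝ) + 1 := by exact_mod_cast hi.2
    linarith
  rw [min_eq_right (by linarith : (i:ℝ) - c ≤ 1), max_eq_left h2, zero_div]

lemma G_diff (hμpos : ∀ j, 1 ≤ j → 0 < μ j) (p : ℕ) (hpm : p ≤ m) {c c' : ℝ}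
    (h1 : (p:ℝ) ≤ c) (h2 : c ≤ c') (h3 : c' ≤ (p:ℝ) + 1) :
    Gfun μ m c - Gfun μ m c' = (c' - c) / (Real.exp 1 * μ (p+1)) := by
  unfold Gfun
  rw [← mul_sub, ← Finset.sum_sub_distrib]
  have hsum : ∑ i ∈ Finset.Icc 1 (m+1),
      (max 0 (min 1 ((i:ℝ) - c)) / μ i - max 0 (min 1 ((i:ℝ) - c')) / μ i)
      = (c' - c) / μ (p+1) := by
    rw [Finset.sum_eq_single (p+1)]
    · have e1 : max 0 (min 1 ((((p+1):ℕ):ℝ) - c)) = ((p:ℝ)+1) - c := by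
        push_cast
        rw [min_eq_right (by linarith), max_eq_right (by linarith)]
      have e2 : max 0 (min 1 ((((p+1):ℕ):ℝ) - c')) = ((p:ℝ)+1) - c' := by
        push_cast
        rw [min_eq_right (by linarith), max_eq_right (by linarith)]
      rw [e1, e2, div_sub_div_same]
      congr 1
      ring
    · intro i hi hne
      rw [Finset.mem_Icc] at hi
      rcases Nat.lt_or_ge i (p+1) with h | h
      · have hip : (i:ℝ) ≤ (p:ℝ) := by exact_mod_cast (by omega : i ≤ p)
        have hi1 : (i:ℝ) - c ≤ 0 := by linarith
        have hi2 : (i:ℝ) - c' ≤ 0 := by linarith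
        rw [min_eq_right (by linarith), min_eq_right (by linarith),
          max_eq_left hi1, max_eq_left hi2]
        simp
      · have h' : p + 2 ≤ i := by omega
        have hip : ((p:ℝ)+2) ≤ (i:ℝ) := by exact_mod_cast h'
        have hi1 : (1:ℝ) ≤ (i:ℝ) - c := by linarith
        have hi2 : (1:ℝ) ≤ (i:ℝ) - c' := by linarith
        rw [min_eq_left hi1, min_eq_left hi2]
        simp
    · intro h
      exact absurd (Finset.mem_Icc.mpr ⟨by omega, by omega⟩) h
  rw [hsum]
  have hμ : μ (p+1) ≠ 0 := (hμpos (p+1) (by omega)).ne'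
  have hE : Real.exp 1 ≠ 0 := (Real.exp_pos 1).ne'
  field_simp

lemma G_nat (j0 : ℕ) :
    Gfun μ m (j0:ℝ) = (Real.exp 1)⁻¹ * ∑ i ∈ Finset.Ioc j0 (m+1), 1 / μ i := by
  unfold Gfun
  congr 1
  have hsub : Finset.Ioc j0 (m+1) ⊆ Finset.Icc 1 (m+1) := by
    intro i hi
    rw [Finset.mem_Ioc] at hi
    exact Finset.mem_Icc.mpr ⟨by omega, hi.2⟩
  have hzero : ∀ i ∈ Finset.Icc 1 (m+1), i ∉ Finset.Ioc j0 (m+1) →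
      max 0 (min 1 ((i:ℝ) - (j0:ℝ))) / μ i = 0 := by
    intro i hi hni
    rw [Finset.mem_Icc] at hi
    rw [Finset.mem_Ioc] at hni
    have hij : i ≤ j0 := by omega
    have h0 : (i:ℝ) - (j0:ℝ) ≤ 0 := by
      have : (i:ℝ) ≤ (j0:ℝ) := by exact_mod_cast hij
      linarith
    rw [min_eq_right (by linarith), max_eq_left h0, zero_div]
  rw [← Finset.sum_subset hsub hzero]
  apply Finset.sum_congr rfl
  intro i hi
  rw [Finset.mem_Ioc] at hi
  have h1 : (1:ℝ) ≤ (i:ℝ) - (j0:ℝ) := by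
    have : (j0:ℝ) + 1 ≤ (i:ℝ) := by exact_mod_cast hi.1
    linarith
  rw [min_eq_left h1, max_eq_right (by linarith : (0:ℝ) ≤ (1:ℝ))]

lemma G_pos (hμpos : ∀ j, 1 ≤ j → 0 < μ j) {j0 : ℕ} (h : j0 ≤ m) :
    0 < Gfun μ m (j0:ℝ) := by
  rw [G_nat]
  apply mul_pos (inv_pos.mpr (Real.exp_pos 1))
  apply Finset.sum_pos
  · intro i hi
    rw [Finset.mem_Ioc] at hi
    exact div_pos one_pos (hμpos i (by omega))
  · exact Finset.nonempty_Ioc.mpr (by omega)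

end G

section Cross

variable {μ M : ℕ → ℝ} {f : ℝ → ℝ} {N m : ℕ} {x y : ℝ} {U : Set ℝ}

lemma abs_split {s t u : ℝ} (h : u ∈ Set.uIcc s t) : |s - t| = |u - t| + |s - u| := by
  rcases Set.mem_uIcc.mp h with ⟨h1, h2⟩ | ⟨h1, h2⟩
  · rw [abs_of_nonpos (by linarith), abs_of_nonpos (by linarith), abs_of_nonpos (by linarith)]
    ring
  · rw [abs_of_nonneg (by linarith), abs_of_nonneg (by linarith), abs_of_nonneg (by linarith)]
    ring

lemma cross_one (hμpos : ∀ j, 1 ≤ j → 0 < μ j) (hμmono : ∀ j, 1 ≤ j → μ j ≤ μ (j + 1))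
    (hM0 : 0 < M 0) (hMrec : ∀ j, M (j + 1) = M j * μ (j + 1))
    (hU : IsOpen U) (hIU : Set.Icc x y ⊆ U) (hfU : ContDiffOn ℝ (N : ℕ∞) f U)
    (hbd : ∀ j ≤ N, ∀ t ∈ Set.Icc x y, |iteratedDeriv j f t| ≤ M j)
    (hm : m + 1 ≤ N)
    (n p : ℕ) (hnp : n ≤ p) (hpm : p ≤ m)
    {s t : ℝ} (hs : s ∈ Set.Icc x y) (ht : t ∈ Set.Icc x y) {c c' : ℝ}
    (hpc : (p:ℝ) ≤ c) (hcc' : c < c') (hc'p : c' ≤ (p:ℝ) + 1)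
    (hbt : Real.exp (-c) ≤ bFun f M N n t) (hbs : bFun f M N n s ≤ Real.exp (-c')) :
    Gfun μ m c - Gfun μ m c' < |s - t| := by
  have hμp : 0 < μ (p+1) := hμpos (p+1) (by omega)
  have hst : s ≠ t := by
    rintro rfl
    have := hbt.trans hbs
    rw [Real.exp_le_exp] at this
    linarith
  have hk := key hμpos hμmono hM0 hMrec hU hIU hfU hbd n p hnp (by omega) hs ht hst
  have hmax : max (bFun f M N n s) (Real.exp (-((p:ℝ)+1))) ≤ Real.exp (-c') := by
    apply max_le hbs
    exact Real.exp_le_exp.mpr (by linarith)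
  have h2 : bFun f M N n t < Real.exp (-c') * Real.exp (Real.exp 1 * μ (p+1) * |s - t|) := by
    calc bFun f M N n t < _ := hk
    _ ≤ Real.exp (-c') * Real.exp (Real.exp 1 * μ (p+1) * |s - t|) := by
      exact mul_le_mul_of_nonneg_right hmax (Real.exp_pos _).le
  have h3 : Real.exp (-c) < Real.exp (-c' + Real.exp 1 * μ (p+1) * |s - t|) := by
    rw [Real.exp_add]
    exact lt_of_le_of_lt hbt h2
  rw [Real.exp_lt_exp] at h3
  have h4 : (c' - c) / (Real.exp 1 * μ (p+1)) < |s - t| := by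
    rw [div_lt_iff₀ (mul_pos (Real.exp_pos 1) hμp)]
    nlinarith [mul_pos (Real.exp_pos 1) hμp]
  calc Gfun μ m c - Gfun μ m c' = (c' - c) / (Real.exp 1 * μ (p+1)) :=
        G_diff hμpos p hpm hpc hcc'.le hc'p
  _ < |s - t| := h4

lemma cross (hμpos : ∀ j, 1 ≤ j → 0 < μ j) (hμmono : ∀ j, 1 ≤ j → μ j ≤ μ (j + 1))
    (hM0 : 0 < M 0) (hMrec : ∀ j, M (j + 1) = M j * μ (j + 1))
    (hU : IsOpen U) (hIU : Set.Icc x y ⊆ U) (hfU : ContDiffOn ℝ (N : ℕ∞) f U)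
    (hbd : ∀ j ≤ N, ∀ t ∈ Set.Icc x y, |iteratedDeriv j f t| ≤ M j)
    (hm : m + 1 ≤ N) (hxy : x ≤ y) :
    ∀ (k : ℕ) (n : ℕ), n ≤ N → ∀ (s t : ℝ), s ∈ Set.Icc x y → t ∈ Set.Icc x y →
    ∀ (c c' : ℝ), (n:ℝ) ≤ c → c' ≤ (m:ℝ) + 1 → c' ≤ (Nat.floor c : ℝ) + (k:ℝ) →
    Real.exp (-c) ≤ bFun f M N n t → bFun f M N n s ≤ Real.exp (-c') →
    Gfun μ m c - Gfun μ m c' ≤ |s - t| ∧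
      (c < c' → Gfun μ m c - Gfun μ m c' < |s - t|) := by
  intro k
  induction k with
  | zero =>
    intro n hnN s t hs ht c c' hnc hc'm hck hbt hbs
    have hc0 : (0:ℝ) ≤ c := le_trans (by positivity) hnc
    have hfl : ((Nat.floor c : ℕ) : ℝ) ≤ c := Nat.floor_le hc0
    have hcc : c' ≤ c := by
      rw [Nat.cast_zero, add_zero] at hck
      linarith
    constructor
    · have := G_anti (m := m) hμpos hcc
      have h2 : 0 ≤ |s - t| := abs_nonneg _
      linarith
    · intro h
      linarith
  | succ k ih =>
    intro n hnN s t hs ht c c' hnc hc'm hck hbt hbs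
    have hc0 : (0:ℝ) ≤ c := le_trans (by positivity) hnc
    by_cases hcc : c' ≤ c
    · constructor
      · have := G_anti (m := m) hμpos hcc
        have h2 : 0 ≤ |s - t| := abs_nonneg _
        linarith
      · intro h
        linarith
    push_neg at hcc
    set p := Nat.floor c with hp
    have hpc : (p:ℝ) ≤ c := Nat.floor_le hc0
    have hcp1 : c < (p:ℝ) + 1 := Nat.lt_floor_add_one c
    have hnp : n ≤ p := Nat.le_floor hnc
    have hpm : p ≤ m := by
      have : (p:ℝ) < (m:ℝ) + 1 := by linarith
      exact_mod_cast (by exact_mod_cast Nat.lt_succ_iff.mp (by exact_mod_cast this) : p ≤ m)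
    by_cases hc'p : c' ≤ (p:ℝ) + 1
    · have hstrict := cross_one hμpos hμmono hM0 hMrec hU hIU hfU hbd hm n p hnp hpm
        hs ht hpc hcc hc'p hbt hbs
      exact ⟨hstrict.le, fun _ => hstrict⟩
    push_neg at hc'p
    -- intermediate value: find u with bFun n u = exp(-(p+1))
    have hcont : ContinuousOn (fun v => bFun f M N n v) (Set.Icc x y) :=
      bFun_cont hnN hU hfU hIU
    have huIcc : Set.uIcc s t ⊆ Set.Icc x y := by
      rw [← Set.uIcc_of_le hxy]
      exact Set.uIcc_subset_uIcc (by rw [Set.uIcc_of_le hxy]; exact hs)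
        (by rw [Set.uIcc_of_le hxy]; exact ht)
    have hmem : Real.exp (-((p:ℝ)+1)) ∈ Set.uIcc (bFun f M N n s) (bFun f M N n t) := by
      apply Set.Icc_subset_uIcc
      constructor
      · calc bFun f M N n s ≤ Real.exp (-c') := hbs
        _ ≤ Real.exp (-((p:ℝ)+1)) := Real.exp_le_exp.mpr (by linarith)
      · calc Real.exp (-((p:ℝ)+1)) ≤ Real.exp (-c) := Real.exp_le_exp.mpr (by linarith)
        _ ≤ bFun f M N n t := hbt
    obtain ⟨u, hu_mem, hbu⟩ := intermediate_value_uIcc (hcont.mono huIcc) hmem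
    have hu_xy : u ∈ Set.Icc x y := huIcc hu_mem
    have part1 : Gfun μ m c - Gfun μ m ((p:ℝ)+1) ≤ |u - t| :=
      (cross_one hμpos hμmono hM0 hMrec hU hIU hfU hbd hm n p hnp hpm
        hu_xy ht hpc hcp1 le_rfl hbt (le_of_eq hbu)).le
    have part2 : Gfun μ m ((p:ℝ)+1) - Gfun μ m c' < |s - u| := by
      have hn_p1 : (n:ℝ) ≤ (p:ℝ) + 1 := by
        have : (n:ℝ) ≤ (p:ℝ) := Nat.cast_le.mpr hnp
        linarith
      have hfloor : c' ≤ ((Nat.floor ((p:ℝ)+1) : ℕ) : ℝ) + (k:ℝ) := by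
        have he : ((p:ℝ) + 1) = ((p + 1 : ℕ) : ℝ) := by push_cast; ring
        rw [he, Nat.floor_natCast]
        push_cast
        push_cast at hck
        linarith
      have hres := ih n hnN s u hs hu_xy ((p:ℝ)+1) c' hn_p1 hc'm hfloor
        (le_of_eq hbu.symm) hbs
      exact hres.2 hc'p
    have hsplit : |s - t| = |u - t| + |s - u| := abs_split hu_mem
    constructor
    · rw [hsplit]
      linarith
    · intro _
      rw [hsplit]
      linarith

end Cross

end BangAux

open BangAux in
/-- Bang's fundamental inequality. -/
theorem stmt1
    (μ M : ℕ → ℝ)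
    (hμpos : ∀ j, 1 ≤ j → 0 < μ j)
    (hμmono : ∀ j, 1 ≤ j → μ j ≤ μ (j + 1))
    (hM0 : 0 < M 0)
    (hMrec : ∀ j, M (j + 1) = M j * μ (j + 1))
    (x y : ℝ) (hxy : x < y)
    (N : ℕ) (hN : 1 ≤ N)
    (f : ℝ → ℝ)
    (hf : ∃ U : Set ℝ, IsOpen U ∧ Set.Icc x y ⊆ U ∧ ContDiffOn ℝ (N : ℕ∞) f U)
    (hbd : ∀ j ≤ N, ∀ t ∈ Set.Icc x y, |iteratedDeriv j f t| ≤ M j)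
    (m : ℕ) (hm : m + 1 ≤ N)
    (z : ℕ → ℝ) (hzmem : ∀ j ≤ m, z j ∈ Set.Icc x y)
    (hzzero : ∀ j ≤ m, iteratedDeriv j f (z j) = 0)
    (w : ℝ) (hw : w ∈ Set.Icc x y)
    (hb0pos : 0 < bFun f M N 0 w)
    (j0 : ℕ) (hj0 : j0 = sInf {j : ℕ | Real.log (1 / bFun f M N 0 w) ≤ (j : ℝ)}) :
    (1 / Real.exp 1) * ∑ j ∈ Finset.Ioc j0 (m + 1), 1 / μ j ≤
        |w - z 0| + ∑ j ∈ Finset.Icc 1 m, |z (j - 1) - z j| ∧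
    (j0 ≤ m →
      (1 / Real.exp 1) * ∑ j ∈ Finset.Ioc j0 (m + 1), 1 / μ j <
        |w - z 0| + ∑ j ∈ Finset.Icc 1 m, |z (j - 1) - z j|) := by
  classical
  obtain ⟨U, hU, hIU, hfU⟩ := hf
  have hMp : ∀ j, 0 < M j := Mpos hM0 hμpos hMrec
  by_cases hj0m : j0 ≤ m
  swap
  · have hempty : Finset.Ioc j0 (m+1) = ∅ := Finset.Ioc_eq_empty (by omega)
    rw [hempty]
    simp only [Finset.sum_empty, mul_zero]
    constructor
    · exact add_nonneg (abs_nonneg _) (Finset.sum_nonneg (fun i _ => abs_nonneg _))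
    · intro h
      exact absurd h hj0m
  -- main case
  have hj0le : Real.log (1 / bFun f M N 0 w) ≤ (j0:ℝ) := by
    have hne : {j : ℕ | Real.log (1 / bFun f M N 0 w) ≤ (j:ℝ)}.Nonempty := by
      obtain ⟨n, hn⟩ := exists_nat_ge (Real.log (1 / bFun f M N 0 w))
      exact ⟨n, hn⟩
    have hmem := Nat.sInf_mem hne
    rw [← hj0] at hmem
    exact hmem
  have hb0 : Real.exp (-(j0:ℝ)) ≤ bFun f M N 0 w := by
    rw [one_div, Real.log_inv] at hj0le
    have h1 : -(j0:ℝ) ≤ Real.log (bFun f M N 0 w) := by linarith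
    calc Real.exp (-(j0:ℝ)) ≤ Real.exp (Real.log (bFun f M N 0 w)) := Real.exp_le_exp.mpr h1
    _ = bFun f M N 0 w := Real.exp_log hb0pos
  set P : ℕ → ℝ := fun l => if l = 0 then w else z (l-1) with hP
  have hPmem : ∀ l, l ≤ m + 1 → P l ∈ Set.Icc x y := by
    intro l hl
    rcases Nat.eq_zero_or_pos l with rfl | hl0
    · simpa [hP] using hw
    · rw [hP]
      simp only [if_neg (by omega : l ≠ 0)]
      exact hzmem (l-1) (by omega)
  set d : ℕ → ℝ := fun l => |P l - P (l+1)| with hd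
  have hxyle : x ≤ y := le_of_lt hxy
  have main : ∀ r, r ≤ m + 1 → ∃ c : ℝ, (r:ℝ) ≤ c ∧ (j0:ℝ) ≤ c ∧ c ≤ (m:ℝ)+1 ∧
      (Real.exp (-c) ≤ bFun f M N r (P r) ∨ c = (m:ℝ)+1) ∧
      Gfun μ m (j0:ℝ) - Gfun μ m c ≤ ∑ l ∈ Finset.range r, d l ∧
      ((j0:ℝ) < c → Gfun μ m (j0:ℝ) - Gfun μ m c < ∑ l ∈ Finset.range r, d l) := by
    intro r
    induction r with
    | zero =>
      intro _
      refine ⟨(j0:ℝ), by exact_mod_cast Nat.zero_le j0, le_rfl,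
        by exact_mod_cast (by omega : j0 ≤ m+1), Or.inl ?_, ?_, ?_⟩
      · have hP0 : P 0 = w := by simp [hP]
        rw [hP0]
        exact hb0
      · simp
      · intro h
        exact absurd h (lt_irrefl _)
    | succ r ihr =>
      intro hr1
      have hrm : r ≤ m := by omega
      obtain ⟨c, hc1, hc2, hc3, hc4, hc5, hc6⟩ := ihr (by omega)
      have hdr : 0 ≤ d r := abs_nonneg _
      have hsucc : ∑ l ∈ Finset.range (r+1), d l = (∑ l ∈ Finset.range r, d l) + d r :=
        Finset.sum_range_succ _ _
      by_cases hceq : c = (m:ℝ)+1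
      · refine ⟨(m:ℝ)+1, by exact_mod_cast (by omega : r+1 ≤ m+1),
          by exact_mod_cast (by omega : j0 ≤ m+1), le_rfl, Or.inr rfl, ?_, ?_⟩
        · rw [hsucc]
          rw [hceq] at hc5
          linarith
        · intro h
          have := hc6 (by rw [hceq]; exact h)
          rw [hceq] at this
          rw [hsucc]
          linarith
      have hclt : c < (m:ℝ)+1 := lt_of_le_of_ne hc3 hceq
      have hbc : Real.exp (-c) ≤ bFun f M N r (P r) := by
        rcases hc4 with h | h
        · exact h
        · exact absurd h hceq
      have hPr1 : P (r+1) = z r := by simp [hP]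
      have hβeq : bFun f M N r (P (r+1)) = bFun f M N (r+1) (P (r+1)) := by
        apply bFun_succ hMp (by omega : r < N)
        rw [hPr1]
        exact hzzero r hrm
      set β := bFun f M N (r+1) (P (r+1)) with hβ
      have hPr1mem : P (r+1) ∈ Set.Icc x y := hPmem (r+1) (by omega)
      have hPrmem : P r ∈ Set.Icc x y := hPmem r (by omega)
      have hfl0 : (0:ℝ) ≤ ((Nat.floor c : ℕ) : ℝ) := Nat.cast_nonneg _
      have hdrc : d r = |P (r+1) - P r| := by rw [hd, abs_sub_comm]
      by_cases hsmall : β ≤ Real.exp (-((m:ℝ)+1))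
      · have hcr := cross hμpos hμmono hM0 hMrec hU hIU hfU hbd hm hxyle (m+1) r (by omega)
          (P (r+1)) (P r) hPr1mem hPrmem c ((m:ℝ)+1) hc1 le_rfl
          (by push_cast; linarith) hbc (by rw [hβeq]; exact hsmall)
        have hstrict := hcr.2 hclt
        rw [← hdrc] at hstrict
        refine ⟨(m:ℝ)+1, by exact_mod_cast (by omega : r+1 ≤ m+1),
          by exact_mod_cast (by omega : j0 ≤ m+1), le_rfl, Or.inr rfl, ?_, ?_⟩
        · rw [hsucc]
          linarith
        · intro _
          rw [hsucc]
          linarith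
      push_neg at hsmall
      have hβpos : 0 < β := lt_trans (Real.exp_pos _) hsmall
      set c2 : ℝ := -Real.log β with hc2def
      have hexpc2 : Real.exp (-c2) = β := by rw [hc2def, neg_neg, Real.exp_log hβpos]
      have hc2m : c2 < (m:ℝ)+1 := by
        have h1 : Real.exp (-((m:ℝ)+1)) < Real.exp (-c2) := by rw [hexpc2]; exact hsmall
        rw [Real.exp_lt_exp] at h1
        linarith
      have hc2r : (r:ℝ)+1 ≤ c2 := by
        have hβle : β ≤ Real.exp (-((r:ℝ)+1)) := by
          have h1 : bFun f M N (r+1) (P (r+1)) ≤ Real.exp (-((r+1:ℕ):ℝ)) :=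
            bFun_le_exp hMp (by omega) (fun j hj => hbd j hj (P (r+1)) hPr1mem)
          rw [hβ]
          refine h1.trans (le_of_eq ?_)
          congr 1
          push_cast
          ring
        have h2 : Real.exp (-c2) ≤ Real.exp (-((r:ℝ)+1)) := by rw [hexpc2]; exact hβle
        rw [Real.exp_le_exp] at h2
        linarith
      by_cases hcc2 : c2 ≤ c
      · refine ⟨c, by push_cast; linarith, hc2, hc3, Or.inl ?_, ?_, ?_⟩
        · calc Real.exp (-c) ≤ Real.exp (-c2) := Real.exp_le_exp.mpr (by linarith)
          _ = β := hexpc2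
        · rw [hsucc]
          linarith
        · intro h
          have := hc6 h
          rw [hsucc]
          linarith
      push_neg at hcc2
      have hcr := cross hμpos hμmono hM0 hMrec hU hIU hfU hbd hm hxyle (m+1) r (by omega)
        (P (r+1)) (P r) hPr1mem hPrmem c c2 hc1 hc2m.le
        (by push_cast; linarith) hbc (by rw [hβeq, ← hexpc2])
      have hstrict := hcr.2 hcc2
      rw [← hdrc] at hstrict
      refine ⟨c2, by push_cast; linarith, hc2.trans hcc2.le, hc2m.le,
        Or.inl (le_of_eq hexpc2), ?_, ?_⟩
      · rw [hsucc]
        linarith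
      · intro _
        rw [hsucc]
        linarith
  obtain ⟨c, hc1, hc2, hc3, hc4, hc5, hc6⟩ := main (m+1) le_rfl
  have hceq : c = (m:ℝ)+1 := le_antisymm hc3 (by push_cast at hc1 ⊢; linarith)
  have hG0 : Gfun μ m c = 0 := G_zero (le_of_eq hceq.symm)
  have hstrict : Gfun μ m (j0:ℝ) < ∑ l ∈ Finset.range (m+1), d l := by
    have h1 := hc6 (by rw [hceq]; exact_mod_cast (by omega : j0 < m+1))
    rw [hG0] at h1
    linarith
  have hsum : ∑ l ∈ Finset.range (m+1), d l
      = |w - z 0| + ∑ j ∈ Finset.Icc 1 m, |z (j-1) - z j| := by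
    rw [Finset.sum_range_succ']
    have h0 : d 0 = |w - z 0| := by
      have e1 : P 0 = w := by simp [hP]
      have e2 : P 1 = z 0 := by simp [hP]
      simp only [hd]
      rw [e1, e2]
    rw [h0, add_comm]
    congr 1
    rw [← Finset.Ico_add_one_right_eq_Icc, Finset.sum_Ico_eq_sum_range]
    apply Finset.sum_congr (by norm_num)
    intro i _
    have e1 : P (i+1) = z i := by simp [hP]
    have e2 : P (i+1+1) = z (i+1) := by simp [hP]
    simp only [hd]
    rw [e1, e2, show 1 + i - 1 = i by omega, show 1 + i = i + 1 by omega]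
  have hGval : Gfun μ m (j0:ℝ)
      = (1 / Real.exp 1) * ∑ i ∈ Finset.Ioc j0 (m+1), 1 / μ i := by
    rw [G_nat, one_div]
  rw [← hsum, ← hGval]
  exact ⟨hstrict.le, fun _ => hstrict⟩
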